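/- Assume the Four Exponentials Conjecture: for every 2×2 matrix (λ_{ij}) of complex numbers such that exp(λ_{ij}) is algebraic for all i, j, if the two rows are linearly independent over ℚ and the two columns are linearly independent over ℚ, then the determinant λ₁₁λ₂₂ − λ₁₂λ₂₁ is nonzero. Then: if ε₁, ε₂ are positive real algebraic numbers such that log ε₁ and log ε₂ are linearly independent over ℚ, x₁, x₂ are positive real algebraic numbers, and r is a real number with log x₁ = r·log ε₁ and log x₂ = r·log ε₂, then r is rational. -/
import Mathlib

/-- Example 2 of the paper: the Four Exponentials Conjecture implies that if `ε₁, ε₂` are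
positive real algebraic numbers with `log ε₁, log ε₂` linearly independent over `ℚ`, and
`x₁, x₂` are positive real algebraic numbers with `log x₁ = r·log ε₁` and
`log x₂ = r·log ε₂` for some real number `r`, then `r` is rational. -/
theorem four_exponentials_implies_ratio_rational
    (fourExp : ∀ M : Matrix (Fin 2) (Fin 2) ℂ,
      (∀ i j, IsAlgebraic ℚ (Complex.exp (M i j))) →
      LinearIndependent ℚ (fun i : Fin 2 => M i) →
      LinearIndependent ℚ (fun j : Fin 2 => M.transpose j) →
      M.det ≠ 0)
    (ε₁ ε₂ x₁ x₂ : ℝ) (hε₁ : 0 < ε₁) (hε₂ : 0 < ε₂)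
    (hε₁alg : IsAlgebraic ℚ ε₁) (hε₂alg : IsAlgebraic ℚ ε₂)
    (hind : LinearIndependent ℚ ![Real.log ε₁, Real.log ε₂])
    (hx₁ : 0 < x₁) (hx₂ : 0 < x₂)
    (hx₁alg : IsAlgebraic ℚ x₁) (hx₂alg : IsAlgebraic ℚ x₂)
    (r : ℝ) (h₁ : Real.log x₁ = r * Real.log ε₁) (h₂ : Real.log x₂ = r * Real.log ε₂) :
    ∃ q : ℚ, r = q := by
  set L1 := Real.log ε₁ with hL1def
  set L2 := Real.log ε₂ with hL2def
  have hL1ne : L1 ≠ 0 := by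
    have := hind.ne_zero 0
    simpa using this
  set M : Matrix (Fin 2) (Fin 2) ℂ :=
    !![(L1 : ℂ), (L2 : ℂ); ((r * L1 : ℝ) : ℂ), ((r * L2 : ℝ) : ℂ)] with hM
  have halgC : ∀ y : ℝ, 0 < y → IsAlgebraic ℚ y → IsAlgebraic ℚ (Complex.exp ((Real.log y : ℝ) : ℂ)) := by
    intro y hy hyalg
    have : Complex.exp ((Real.log y : ℝ) : ℂ) = (y : ℂ) := by
      rw [← Complex.ofReal_exp, Real.exp_log hy]
    rw [this]
    have := hyalg.algebraMap (A := ℂ)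
    simpa using this
  have halg : ∀ i j, IsAlgebraic ℚ (Complex.exp (M i j)) := by
    intro i j
    fin_cases i <;> fin_cases j
    · simpa [hM] using halgC ε₁ hε₁ hε₁alg
    · simpa [hM] using halgC ε₂ hε₂ hε₂alg
    · have := halgC x₁ hx₁ hx₁alg
      rw [h₁] at this
      simpa [hM] using this
    · have := halgC x₂ hx₂ hx₂alg
      rw [h₂] at this
      simpa [hM] using this
  have hindR : ∀ a b : ℚ, (a : ℝ) * L1 + (b : ℝ) * L2 = 0 → a = 0 ∧ b = 0 := by
    intro a b hab
    have := Fintype.linearIndependent_iff.mp hind ![a, b] (by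
      simp [Fin.sum_univ_two, Rat.smul_def]
      linarith)
    exact ⟨this 0, this 1⟩
  have hcols : LinearIndependent ℚ (fun j : Fin 2 => M.transpose j) := by
    rw [Fintype.linearIndependent_iff]
    intro g hg i
    have h0 := congrFun hg 0
    simp [hM, Fin.sum_univ_two, Matrix.transpose_apply, Rat.smul_def] at h0
    have h0' : ((g 0 : ℝ) * L1 + (g 1 : ℝ) * L2 : ℝ) = 0 := by
      have : (((g 0 : ℝ) * L1 + (g 1 : ℝ) * L2 : ℝ) : ℂ) = 0 := by
        push_cast
        linear_combination h0
      exact_mod_cast this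
    obtain ⟨ha, hb⟩ := hindR _ _ h0'
    fin_cases i
    · exact ha
    · exact hb
  have hdet : M.det = 0 := by
    simp [hM, Matrix.det_fin_two_of]
    ring
  have hrows : ¬ LinearIndependent ℚ (fun i : Fin 2 => M i) := fun h =>
    fourExp M halg h hcols hdet
  rw [Fintype.not_linearIndependent_iff] at hrows
  obtain ⟨g, hg, i, hi⟩ := hrows
  have h0 := congrFun hg 0
  simp [hM, Fin.sum_univ_two, Rat.smul_def] at h0
  have key : ((g 0 : ℝ) + (g 1 : ℝ) * r) * L1 = 0 := by
    have : ((((g 0 : ℝ) + (g 1 : ℝ) * r) * L1 : ℝ) : ℂ) = 0 := by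
      push_cast
      linear_combination h0
    exact_mod_cast this
  have hsum : (g 0 : ℝ) + (g 1 : ℝ) * r = 0 := by
    rcases mul_eq_zero.mp key with h | h
    · exact h
    · exact absurd h hL1ne
  have hg1 : g 1 ≠ 0 := by
    intro hg1
    have hg0 : (g 0 : ℝ) = 0 := by rw [hg1] at hsum; push_cast at hsum; linarith
    have hg0' : g 0 = 0 := by exact_mod_cast hg0
    fin_cases i
    · exact hi hg0'
    · exact hi hg1
  refine ⟨-(g 0 / g 1), ?_⟩
  have hg1R : (g 1 : ℝ) ≠ 0 := by exact_mod_cast hg1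
  push_cast
  field_simp
  linarith [hsum]
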